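/- Let T be a Laver tree and f : [T] → 2^ω a continuous function. Then for every n ∈ ω and every τ ∈ T with stem(T) ⊆ τ, there exist a Laver tree T' ⊆ T_τ with stem(T') = stem(T_τ) and a binary string s ∈ 2^n such that f(y) extends s for every y ∈ [T'] (i.e. [T'] ⊆ f⁻¹([s]), where [s] = {x ∈ 2^ω : s ⊆ x}). -/
import Mathlib


/-- The restriction `x↾n` of a sequence `x ∈ ω^ω` to its first `n` values, as a finite sequence. -/
def seqRestrict (x : ℕ → ℕ) (n : ℕ) : List ℕ := List.ofFn fun i : Fin n => x i

/-- A tree on `ω`: a nonempty set of finite sequences closed under initial segments. -/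
def IsSeqTree (T : Set (List ℕ)) : Prop :=
  T.Nonempty ∧ ∀ s ∈ T, ∀ t : List ℕ, t <+: s → t ∈ T

/-- `[T]`, the set of branches of a tree `T ⊆ ω^{<ω}`. -/
def branches (T : Set (List ℕ)) : Set (ℕ → ℕ) := {x | ∀ n : ℕ, seqRestrict x n ∈ T}

/-- `S` and `T` are compatible in `𝕋` (ordered by inclusion) if they have a common extension. -/
def Compat (𝕋 : Set (Set (List ℕ))) (S T : Set (List ℕ)) : Prop :=
  ∃ R ∈ 𝕋, R ⊆ S ∧ R ⊆ T

/-- `T` is a Laver tree with stem `st`: `st ∈ T` is comparable with every node of `T`, and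
every node extending `st` has infinitely many immediate successors in `T`. -/
def IsLaverWithStem (T : Set (List ℕ)) (st : List ℕ) : Prop :=
  IsSeqTree T ∧ st ∈ T ∧ (∀ t ∈ T, t <+: st ∨ st <+: t) ∧
    ∀ t ∈ T, st <+: t → {n : ℕ | t ++ [n] ∈ T}.Infinite

/-- A Laver tree. -/
def IsLaver (T : Set (List ℕ)) : Prop := ∃ st : List ℕ, IsLaverWithStem T st

-- auxiliary lemmas

lemma seqRestrict_length (x : ℕ → ℕ) (m : ℕ) : (seqRestrict x m).length = m := by
  simp [seqRestrict]

lemma seqRestrict_getElem (x : ℕ → ℕ) {m i : ℕ} (h : i < (seqRestrict x m).length) :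
    (seqRestrict x m)[i] = x i := by
  simp [seqRestrict]

lemma seqRestrict_prefix (x : ℕ → ℕ) {a b : ℕ} (h : a ≤ b) :
    seqRestrict x a <+: seqRestrict x b := by
  rw [List.prefix_iff_eq_take]
  apply List.ext_getElem
  · simp [seqRestrict]; omega
  · intro i h1 h2
    simp [seqRestrict, List.getElem_take]

lemma mem_nhds_cylinder (y : ℕ → ℕ) {V : Set (ℕ → ℕ)} (h : V ∈ nhds y) :
    ∃ m : ℕ, ∀ x : ℕ → ℕ, (∀ i < m, x i = y i) → x ∈ V := by
  rw [nhds_pi, Filter.mem_pi] at h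
  obtain ⟨I, hIfin, t, ht, hsub⟩ := h
  obtain ⟨m, hm⟩ := hIfin.bddAbove
  refine ⟨m + 1, fun x hx => hsub fun i hi => ?_⟩
  have hi' : i ≤ m := hm hi
  rw [hx i (by omega)]
  exact mem_of_mem_nhds (ht i)

def GoodNode (T : Set (List ℕ)) (f : (ℕ → ℕ) → (ℕ → Bool)) (n : ℕ) (t : List ℕ) : Prop :=
  ∃ (T' : Set (List ℕ)) (s : List Bool),
    IsLaverWithStem T' t ∧
    T' ⊆ {u ∈ T | t <+: u ∨ u <+: t} ∧
    s.length = n ∧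
    ∀ y ∈ branches T', (List.ofFn fun i : Fin n => f y i) = s

lemma glue (T : Set (List ℕ)) (hTtree : IsSeqTree T)
    (f : (ℕ → ℕ) → (ℕ → Bool)) (n : ℕ) (t : List ℕ) (ht : t ∈ T)
    (K : Set ℕ) (hK : K.Infinite) (s : List Bool) (hs : s.length = n)
    (Tk : ℕ → Set (List ℕ))
    (h1 : ∀ k ∈ K, IsLaverWithStem (Tk k) (t ++ [k]))
    (h2 : ∀ k ∈ K, Tk k ⊆ {u ∈ T | t ++ [k] <+: u ∨ u <+: t ++ [k]})
    (h3 : ∀ k ∈ K, ∀ y ∈ branches (Tk k), (List.ofFn fun i : Fin n => f y i) = s) :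
    GoodNode T f n t := by
  classical
  set T' : Set (List ℕ) := {u | u <+: t} ∪ ⋃ k ∈ K, Tk k with hT'def
  have hmem : ∀ u, u ∈ T' ↔ u <+: t ∨ ∃ k ∈ K, u ∈ Tk k := by
    intro u; simp [hT'def, Set.mem_union, Set.mem_iUnion]
  have hTksub : ∀ k ∈ K, Tk k ⊆ T' := by
    intro k hk u hu; exact (hmem u).mpr (Or.inr ⟨k, hk, hu⟩)
  have hcompat : ∀ u ∈ T', u <+: t ∨ t <+: u := by
    intro u hu
    rcases (hmem u).mp hu with h | ⟨k, hk, hu'⟩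
    · exact Or.inl h
    · rcases (h2 k hk hu').2 with h | h
      · exact Or.inr ((List.prefix_append t [k]).trans h)
      · rcases List.prefix_or_prefix_of_prefix h (List.prefix_append t [k]) with h' | h'
        · exact Or.inl h'
        · exact Or.inr h'
  have huT : ∀ u ∈ T', u ∈ T := by
    intro u hu
    rcases (hmem u).mp hu with h | ⟨k, hk, hu'⟩
    · exact hTtree.2 t ht u h
    · exact (h2 k hk hu').1
  have htT' : t ∈ T' := (hmem t).mpr (Or.inl (List.prefix_refl t))
  -- key dichotomy for nodes extending t
  have hdich : ∀ u ∈ T', t <+: u → u = t ∨ ∃ k ∈ K, t ++ [k] <+: u ∧ u ∈ Tk k := by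
    intro u hu htu
    rcases (hmem u).mp hu with h | ⟨k, hk, hu'⟩
    · exact Or.inl (h.eq_of_length (le_antisymm h.length_le htu.length_le))
    · rcases (h2 k hk hu').2 with h | h
      · exact Or.inr ⟨k, hk, h, hu'⟩
      · -- u <+: t ++ [k] and t <+: u
        rcases Nat.lt_or_ge u.length (t.length + 1) with hl | hl
        · left
          exact htu.eq_of_length (le_antisymm htu.length_le (by
            have := htu.length_le; omega)) |>.symm ▸ rfl
        · right
          refine ⟨k, hk, ?_, hu'⟩
          have : u = t ++ [k] := h.eq_of_length (by
            have := h.length_le; simp at this ⊢; omega)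
          rw [this]
  refine ⟨T', s, ⟨⟨⟨t, htT'⟩, ?_⟩, htT', fun u hu => (hcompat u hu).symm.imp id id |>.symm.imp id id, ?_⟩, ?_, hs, ?_⟩
  · -- closed under prefixes
    intro u hu p hp
    rcases (hmem u).mp hu with h | ⟨k, hk, hu'⟩
    · exact (hmem p).mpr (Or.inl (hp.trans h))
    · exact hTksub k hk ((h1 k hk).1.2 u hu' p hp)
  · -- infinite successors
    intro u hu htu
    rcases hdich u hu htu with rfl | ⟨k, hk, hku, hu'⟩
    · apply hK.mono
      intro k hk
      exact hTksub k hk ((h1 k hk).2.1)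
    · apply ((h1 k hk).2.2.2 u hu' hku).mono
      intro m hm
      exact hTksub k hk hm
  · -- subset of T_t
    intro u hu
    exact ⟨huT u hu, ((hcompat u hu).symm.imp id id)⟩
  · -- decides s
    intro y hy
    have h0 : seqRestrict y (t.length + 1) ∈ T' := hy (t.length + 1)
    have hlen0 : (seqRestrict y (t.length + 1)).length = t.length + 1 := seqRestrict_length _ _
    obtain ⟨k, hk, hk0⟩ : ∃ k ∈ K, seqRestrict y (t.length + 1) = t ++ [k] := by
      rcases (hmem _).mp h0 with h | ⟨k, hk, hu'⟩
      · exfalso; have := h.length_le; omega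
      · refine ⟨k, hk, ?_⟩
        rcases (h2 k hk hu').2 with h | h
        · exact (h.eq_of_length (by simp; omega)).symm
        · exact h.eq_of_length (by simp; omega)
    have hyk : y ∈ branches (Tk k) := by
      intro m
      rcases le_or_gt m (t.length + 1) with hm | hm
      · exact (h1 k hk).1.2 _ (hk0 ▸ (h1 k hk).2.1) _ (hk0 ▸ seqRestrict_prefix y hm)
      · have h0' : seqRestrict y m ∈ T' := hy m
        have hlenm : (seqRestrict y m).length = m := seqRestrict_length _ _
        rcases (hmem _).mp h0' with h | ⟨k', hk', hu'⟩
        · exfalso; have := h.length_le; omega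
        · have hkk : t ++ [k'] <+: seqRestrict y m := by
            rcases (h2 k' hk' hu').2 with h | h
            · exact h
            · exfalso; have := h.length_le; simp at this; omega
          have hpref : seqRestrict y (t.length + 1) <+: seqRestrict y m :=
            seqRestrict_prefix y (by omega)
          have : t ++ [k'] = t ++ [k] := by
            rcases List.prefix_or_prefix_of_prefix hkk (hk0 ▸ hpref) with h | h
            · exact h.eq_of_length (by simp)
            · exact (h.eq_of_length (by simp)).symm
          rw [List.append_cancel_left_eq] at this
          simp at this
          rwa [this] at hu'
    exact h3 k hk y hyk


lemma good_of_succ (T : Set (List ℕ)) (st : List ℕ) (hT : IsLaverWithStem T st)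
    (f : (ℕ → ℕ) → (ℕ → Bool)) (n : ℕ) (t : List ℕ) (ht : t ∈ T) (hst : st <+: t)
    (hfin : ¬ {k | t ++ [k] ∈ T ∧ ¬ GoodNode T f n (t ++ [k])}.Infinite) :
    GoodNode T f n t := by
  classical
  have hA : {k | t ++ [k] ∈ T}.Infinite := hT.2.2.2 t ht hst
  have hK1 : {k | t ++ [k] ∈ T ∧ GoodNode T f n (t ++ [k])}.Infinite := by
    apply (hA.diff (Set.not_infinite.mp hfin)).mono
    rintro k ⟨hk1, hk2⟩
    exact ⟨hk1, by by_contra h; exact hk2 ⟨hk1, h⟩⟩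
  set K1 := {k | t ++ [k] ∈ T ∧ GoodNode T f n (t ++ [k])} with hK1def
  choose Tk sk hTk hsub hlen hdec using fun k : K1 => k.2.2
  haveI : Infinite ↥K1 := hK1.to_subtype
  obtain ⟨g, hg⟩ := Finite.exists_infinite_fiber
    (fun k : K1 => (fun i : Fin n => (sk k).getD i false))
  have hfib : ((fun k : K1 => (fun i : Fin n => (sk k).getD i false)) ⁻¹' {g}).Infinite :=
    Set.infinite_coe_iff.mp hg
  set K : Set ℕ := Subtype.val '' ((fun k : K1 => (fun i : Fin n => (sk k).getD i false)) ⁻¹' {g})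
    with hKdef
  have hKinf : K.Infinite := hfib.image Subtype.val_injective.injOn
  have hsk_eq : ∀ k : K1, (fun i : Fin n => (sk k).getD i false) = g → sk k = List.ofFn g := by
    intro k hk
    apply List.ext_getElem
    · simp [hlen k]
    · intro i h1 h2
      have hi : i < n := by rwa [hlen k] at h1
      have := congrFun hk ⟨i, hi⟩
      simp only [List.getD_eq_getElem _ _ h1] at this
      simpa using this.symm ▸ (by simp [this])
  have hTk' : ∀ k ∈ K, ∃ hk : k ∈ K1,
      IsLaverWithStem (Tk ⟨k, hk⟩) (t ++ [k]) ∧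
      Tk ⟨k, hk⟩ ⊆ {u ∈ T | t ++ [k] <+: u ∨ u <+: t ++ [k]} ∧
      (∀ y ∈ branches (Tk ⟨k, hk⟩), (List.ofFn fun i : Fin n => f y i) = List.ofFn g) := by
    rintro k ⟨k', hk', rfl⟩
    refine ⟨k'.2, ?_, ?_, ?_⟩
    · have : (⟨k'.1, k'.2⟩ : K1) = k' := rfl
      rw [this]; exact hTk k'
    · have : (⟨k'.1, k'.2⟩ : K1) = k' := rfl
      rw [this]; exact hsub k'
    · have : (⟨k'.1, k'.2⟩ : K1) = k' := rfl
      rw [this]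
      intro y hy
      rw [hdec k' y hy]
      exact hsk_eq k' hk'
  set Tk2 : ℕ → Set (List ℕ) := fun k => if h : k ∈ K1 then Tk ⟨k, h⟩ else ∅ with hTk2def
  apply glue T hT.1 f n t ht K hKinf (List.ofFn g) (by simp) Tk2
  · intro k hk
    obtain ⟨hk1, h1, _, _⟩ := hTk' k hk
    rw [hTk2def]; simpa [dif_pos hk1] using h1
  · intro k hk
    obtain ⟨hk1, _, h2, _⟩ := hTk' k hk
    rw [hTk2def]; simpa [dif_pos hk1] using h2
  · intro k hk
    obtain ⟨hk1, _, _, h3⟩ := hTk' k hk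
    intro y hy
    apply h3 y
    rw [hTk2def] at hy; simpa [dif_pos hk1] using hy

/-- Pure decision for Laver forcing (Claim 1 of Gray's theorem): if `T` is a Laver tree with
stem `st`, `f : [T] → 2^ω` is continuous, `n ∈ ω`, and `τ ∈ T` extends `st`, then there are a
Laver tree `T' ⊆ T_τ` whose stem is `stem(T_τ) = τ` and a binary string `s` of length `n`
such that `s ⊆ f(y)` for every branch `y` of `T'`, i.e. `[T'] ⊆ f⁻¹([s])`. -/
theorem laver_pure_decision (T : Set (List ℕ)) (st : List ℕ)
    (hT : IsLaverWithStem T st)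
    (f : (ℕ → ℕ) → (ℕ → Bool)) (hf : ContinuousOn f (branches T))
    (n : ℕ) (τ : List ℕ) (hτ : τ ∈ T) (hstem : st <+: τ) :
    ∃ (T' : Set (List ℕ)) (s : List Bool),
      IsLaverWithStem T' τ ∧
      T' ⊆ {t ∈ T | τ <+: t ∨ t <+: τ} ∧
      s.length = n ∧
      ∀ y ∈ branches T', (List.ofFn fun i : Fin n => f y i) = s := by
  classical
  suffices h : GoodNode T f n τ by exact h
  by_contra hbad
  set P : List ℕ → Prop := fun t => t ∈ T ∧ st <+: t ∧ ¬ GoodNode T f n t with hPdef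
  have hstep : ∀ t, P t → ∃ k : ℕ, P (t ++ [k]) := by
    rintro t ⟨ht, hst, hb⟩
    have : {k | t ++ [k] ∈ T ∧ ¬ GoodNode T f n (t ++ [k])}.Infinite := by
      by_contra hfin
      exact hb (good_of_succ T st hT f n t ht hst hfin)
    obtain ⟨k, hk1, hk2⟩ := this.nonempty
    exact ⟨k, hk1, hst.trans (List.prefix_append t [k]), hk2⟩
  choose F hF using hstep
  have hPτ : P τ := ⟨hτ, hstem, hbad⟩
  set L : ℕ → {t : List ℕ // P t} :=
    fun m => Nat.rec ⟨τ, hPτ⟩ (fun _ p => ⟨p.1 ++ [F p.1 p.2], hF p.1 p.2⟩) m with hLdef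
  have hLsucc : ∀ m, (L (m + 1)).1 = (L m).1 ++ [F (L m).1 (L m).2] := fun m => rfl
  have hlenL : ∀ m, (L m).1.length = τ.length + m := by
    intro m
    induction m with
    | zero => rfl
    | succ m ih => rw [hLsucc m]; simp [ih]; omega
  have hchain : ∀ a b, a ≤ b → (L a).1 <+: (L b).1 := by
    intro a b hab
    induction b, hab using Nat.le_induction with
    | base => exact List.prefix_refl _
    | succ b hab ih => rw [hLsucc b]; exact ih.trans (List.prefix_append _ _)
  set y : ℕ → ℕ := fun i => (L (i + 1)).1.getD i 0 with hydef
  have hres : ∀ m, seqRestrict y (τ.length + m) = (L m).1 := by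
    intro m
    apply List.ext_getElem
    · rw [seqRestrict_length, hlenL]
    · intro i h1 h2
      rw [seqRestrict_getElem]
      show (L (i + 1)).1.getD i 0 = (L m).1[i]
      have hi1 : i < (L (i + 1)).1.length := by have := hlenL (i + 1); omega
      rw [List.getD_eq_getElem _ _ hi1]
      rcases le_total (i + 1) m with h | h
      · exact (hchain (i + 1) m h).getElem hi1
      · exact ((hchain m (i + 1) h).getElem h2).symm
  have hyT : y ∈ branches T := by
    intro m
    have h1 : seqRestrict y m <+: seqRestrict y (τ.length + m) :=
      seqRestrict_prefix y (by omega)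
    rw [hres m] at h1
    exact hT.1.2 _ (L m).2.1 _ h1
  -- continuity
  have hU : IsOpen {g : ℕ → Bool | ∀ i < n, g i = f y i} := by
    have heq : {g : ℕ → Bool | ∀ i < n, g i = f y i}
        = ⋂ i ∈ Finset.range n, (fun g : ℕ → Bool => g i) ⁻¹' {f y i} := by
      ext g; simp
    rw [heq]
    exact isOpen_biInter_finset fun i _ => (continuous_apply i).isOpen_preimage _ (isOpen_discrete _)
  have hmem : f ⁻¹' {g | ∀ i < n, g i = f y i} ∈ nhdsWithin y (branches T) :=
    hf y hyT (hU.mem_nhds (fun i _ => rfl))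
  rw [mem_nhdsWithin] at hmem
  obtain ⟨V, hVopen, hyV, hVsub⟩ := hmem
  obtain ⟨m, hm⟩ := mem_nhds_cylinder y (hVopen.mem_nhds hyV)
  -- the node (L m).1 is bad but good: contradiction
  set t0 : List ℕ := (L m).1 with ht0def
  have ht0T : t0 ∈ T := (L m).2.1
  have ht0len : t0.length = τ.length + m := hlenL m
  have ht0res : seqRestrict y t0.length = t0 := by rw [ht0len]; exact hres m
  have hstt0 : st <+: t0 := (L m).2.2.1
  set T2 : Set (List ℕ) := {u ∈ T | t0 <+: u ∨ u <+: t0} with hT2def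
  have hT2laver : IsLaverWithStem T2 t0 := by
    refine ⟨⟨⟨t0, ht0T, Or.inr (List.prefix_refl _)⟩, ?_⟩, ⟨ht0T, Or.inr (List.prefix_refl _)⟩,
      fun u hu => hu.2.symm, ?_⟩
    · rintro u ⟨huT, hcmp⟩ p hp
      refine ⟨hT.1.2 u huT p hp, ?_⟩
      rcases hcmp with h | h
      · rcases List.prefix_or_prefix_of_prefix hp (h.trans (List.prefix_refl u)) with h' | h' <;>
          [skip; exact Or.inl h']
        rcases List.prefix_or_prefix_of_prefix hp h with h'' | h''
        · exact Or.inr h''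
        · exact Or.inl h''
      · exact Or.inr (hp.trans h)
    · rintro u ⟨huT, hcmp⟩ htu
      apply (hT.2.2.2 u huT (hstt0.trans htu)).mono
      intro k hk
      exact ⟨hk, Or.inl (htu.trans (List.prefix_append u [k]))⟩
  have hdec2 : ∀ x ∈ branches T2, (List.ofFn fun i : Fin n => f x i)
      = (List.ofFn fun i : Fin n => f y i) := by
    intro x hx
    have hxT : x ∈ branches T := fun j => (hx j).1
    have hxres : seqRestrict x t0.length = t0 := by
      have h0 := hx t0.length
      rcases h0.2 with h | h
      · exact (h.eq_of_length (by simp [seqRestrict_length])).symm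
      · exact h.eq_of_length (by simp [seqRestrict_length])
    have hagree : ∀ i < m, x i = y i := by
      intro i hi
      have hi' : i < (seqRestrict x t0.length).length := by
        rw [seqRestrict_length]; omega
      have hi'' : i < (seqRestrict y t0.length).length := by
        rw [seqRestrict_length]; omega
      have hxy : seqRestrict x t0.length = seqRestrict y t0.length := hxres.trans ht0res.symm
      calc x i = (seqRestrict x t0.length)[i] := (seqRestrict_getElem x hi').symm
        _ = (seqRestrict y t0.length)[i]'hi'' := List.getElem_of_eq hxy hi'
        _ = y i := seqRestrict_getElem y hi''
    have hxV : x ∈ V := hm x hagree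
    have hfx : f x ∈ {g | ∀ i < n, g i = f y i} := hVsub ⟨hxV, hxT⟩
    apply List.ext_getElem (by simp)
    intro i h1 h2
    simp only [List.getElem_ofFn]
    exact hfx _ (by simpa using h1)
  exact (L m).2.2.2 ⟨T2, List.ofFn fun i : Fin n => f y i, hT2laver, fun u hu => hu,
    by simp, hdec2⟩
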